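/- (Singular values under partial Tucker compression.) Let A ∈ ℝ^{I_1×⋯×I_N}, let Q_1,…,Q_{n−1} be matrices with orthonormal columns (Q_j ∈ ℝ^{I_j×μ_j}), and set B = A ×_1 Q_1^T ⋯ ×_{n−1} Q_{n−1}^T. Let A_(n) and B_(n) be the mode-n unfoldings. Then for every k, σ_k(B_(n)) ≤ σ_k(A_(n)), and consequently for every μ_n, ∑_{k>μ_n} σ_k(B_(n))^2 ≤ ∑_{k>μ_n} σ_k(A_(n))^2. -/

import Mathlib

open Matrix

noncomputable section

/-- Frobenius norm of a tensor (any finitely indexed real array). -/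
def tnorm {ι : Type*} [Fintype ι] (A : ι → ℝ) : ℝ :=
  Real.sqrt (∑ x, A x ^ 2)

/-- Mode-`n` product of a tensor with a square matrix (keeps the dimensions). -/
def tmul {N : ℕ} {I : Fin N → ℕ} (A : (∀ n, Fin (I n)) → ℝ) (n : Fin N)
    (B : Matrix (Fin (I n)) (Fin (I n)) ℝ) : (∀ m, Fin (I m)) → ℝ :=
  fun x => ∑ j : Fin (I n), B (x n) j * A (Function.update x n j)

/-- The multi-mode product `A ×₁ P 1 ×₂ P 2 ⋯ ×_N P N` with square matrices. -/
def multiProj {N : ℕ} {I : Fin N → ℕ} (A : (∀ n, Fin (I n)) → ℝ)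
    (P : ∀ n, Matrix (Fin (I n)) (Fin (I n)) ℝ) : (∀ n, Fin (I n)) → ℝ :=
  fun x => ∑ j : ∀ n, Fin (I n), (∏ n, P n (x n) (j n)) * A j

/-- Simultaneous compression `A ×_m (Q m)ᵀ` over all modes `m ∈ S`. -/
def compress {N : ℕ} {I μ : Fin N → ℕ} (A : (∀ n, Fin (I n)) → ℝ)
    (S : Finset (Fin N)) (Q : ∀ n, Matrix (Fin (I n)) (Fin (μ n)) ℝ) :
    (∀ m, Fin (if m ∈ S then μ m else I m)) → ℝ :=
  fun x => ∑ j : ∀ m : {m : Fin N // m ∈ S}, Fin (I m.val),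
    (∏ m : {m : Fin N // m ∈ S}, Q m.val (j m) (Fin.cast (if_pos m.property) (x m.val))) *
      A (fun m => if h : m ∈ S then j ⟨m, h⟩ else Fin.cast (if_neg h) (x m))

/-- Mode-`n` product of a tensor with a (possibly rectangular) matrix. -/
def modeProd {N : ℕ} {I : Fin N → ℕ} {J : ℕ} (A : (∀ n, Fin (I n)) → ℝ)
    (n : Fin N) (B : Matrix (Fin J) (Fin (I n)) ℝ) :
    (∀ m, Fin (Function.update I n J m)) → ℝ :=
  fun x => ∑ i : Fin (I n),
    B (Fin.cast (Function.update_self n J I) (x n)) i *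
      A (fun m => if h : m = n then Fin.cast (congrArg I h).symm i
                  else Fin.cast (Function.update_of_ne h J I) (x m))

/-- Mode-`n` unfolding of a tensor. -/
def unfold {N : ℕ} {D : Fin N → ℕ} (A : (∀ m, Fin (D m)) → ℝ) (n : Fin N) :
    Matrix (Fin (D n)) (∀ m : {m : Fin N // m ≠ n}, Fin (D m.val)) ℝ :=
  Matrix.of fun i x =>
    A (fun m => if h : m = n then Fin.cast (congrArg D h).symm i else x ⟨m, h⟩)

/-- `sv A k` is the `(k+1)`-st largest singular value of `A` (so `sv A 0` is the largest),
defined via the eigenvalues of `A * Aᴴ`, and `0` for `k` beyond the number of rows. -/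
def sv {m n : Type*} [Fintype m] [Fintype n] [DecidableEq m] (A : Matrix m n ℝ) : ℕ → ℝ :=
  fun k =>
    if h : k < Fintype.card m then
      let f : Fin (Fintype.card m) → ℝ := fun i =>
        (Matrix.isHermitian_mul_conjTranspose_self A).eigenvalues ((Fintype.equivFin m).symm i)
      Real.sqrt (f (Tuple.sort f (Fin.rev ⟨k, h⟩)))
    else 0


/-! ### Auxiliary lemmas -/

section DotAux
variable {m ι : Type*} [Fintype m]

lemma sum_dotP' (s : Finset ι) (f : ι → m → ℝ) (v : m → ℝ) :
    (∑ i ∈ s, f i) ⬝ᵥ v = ∑ i ∈ s, f i ⬝ᵥ v := by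
  simp only [dotProduct, Finset.sum_apply, Finset.sum_mul]
  exact Finset.sum_comm

lemma dotP_sum [Fintype ι] (v : m → ℝ) (f : ι → m → ℝ) :
    v ⬝ᵥ (∑ i, f i) = ∑ i, v ⬝ᵥ f i := by
  simp only [dotProduct, Finset.sum_apply, Finset.mul_sum]
  exact Finset.sum_comm

lemma mulVec_sumP [Fintype ι] (M : Matrix m m ℝ) (f : ι → m → ℝ) :
    M *ᵥ (∑ i, f i) = ∑ i, M *ᵥ f i := by
  funext t
  simp only [mulVec, dotProduct, Finset.sum_apply, Finset.mul_sum]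
  exact Finset.sum_comm

end DotAux

lemma quad_comb {m : Type*} [Fintype m] {N : ℕ} (M : Matrix m m ℝ)
    (w : Fin N → m → ℝ) (c : Fin N → ℝ)
    (hw : ∀ i j, w i ⬝ᵥ w j = if i = j then 1 else 0)
    (hM : ∀ i, M *ᵥ w i = c i • w i) (a : Fin N → ℝ) :
    (∑ i, a i • w i) ⬝ᵥ (M *ᵥ ∑ i, a i • w i) = ∑ i, c i * a i ^ 2 := by
  have h1 : M *ᵥ ∑ i, a i • w i = ∑ i, (a i * c i) • w i := by
    rw [mulVec_sumP]
    refine Finset.sum_congr rfl fun i _ => ?_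
    rw [Matrix.mulVec_smul, hM i, smul_smul]
  rw [h1, dotP_sum]
  have h2 : ∀ j, (∑ i, a i • w i) ⬝ᵥ ((a j * c j) • w j) = a j ^ 2 * c j := by
    intro j
    rw [dotProduct_smul, sum_dotP' Finset.univ]
    have : ∀ i, (a i • w i) ⬝ᵥ w j = a i * if i = j then 1 else 0 := fun i => by
      rw [smul_dotProduct, hw i j]; rfl
    simp only [this, mul_ite, mul_one, mul_zero, Finset.sum_ite_eq', Finset.mem_univ, if_true]
    simp only [smul_eq_mul]; ring
  rw [Finset.sum_congr rfl fun j _ => h2 j]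
  exact Finset.sum_congr rfl fun i _ => by ring

lemma dot_comb {m : Type*} [Fintype m] [DecidableEq m] {N : ℕ}
    (w : Fin N → m → ℝ) (hw : ∀ i j, w i ⬝ᵥ w j = if i = j then 1 else 0)
    (a : Fin N → ℝ) :
    (∑ i, a i • w i) ⬝ᵥ (∑ i, a i • w i) = ∑ i, a i ^ 2 := by
  have := quad_comb (1 : Matrix m m ℝ) w (fun _ => 1) hw (fun i => by simp) a
  simpa using this

lemma orth_li {m : Type*} [Fintype m] {N : ℕ} (w : Fin N → m → ℝ)
    (hw : ∀ i j, w i ⬝ᵥ w j = if i = j then 1 else 0) : LinearIndependent ℝ w := by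
  rw [linearIndependent_iff']
  intro t g hg i hi
  have h0 : (∑ j ∈ t, g j • w j) ⬝ᵥ w i = g i := by
    rw [sum_dotP']
    have : ∀ j, (g j • w j) ⬝ᵥ w i = g j * if j = i then 1 else 0 := fun j => by
      rw [smul_dotProduct, hw j i]; rfl
    simp only [this, mul_ite, mul_one, mul_zero]
    rw [Finset.sum_ite_eq' t i g]
    simp [hi]
  rw [hg] at h0
  simpa using h0.symm

lemma finrank_span_orth {m : Type*} [Fintype m] {N : ℕ} (w : Fin N → m → ℝ)
    (hw : ∀ i j, w i ⬝ᵥ w j = if i = j then 1 else 0) (s : Finset (Fin N)) :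
    Module.finrank ℝ (Submodule.span ℝ (w '' ↑s)) = s.card := by
  have hli : LinearIndependent ℝ (fun i : ↥(↑s : Set (Fin N)) => w i) :=
    (orth_li w hw).comp _ Subtype.val_injective
  have h1 : w '' ↑s = Set.range (fun i : ↥(↑s : Set (Fin N)) => w i) :=
    Set.image_eq_range _ _
  rw [h1, finrank_span_eq_card hli]
  simp

lemma exists_mem_inter_ne_zero {m : Type*} [Fintype m] (U W : Submodule ℝ (m → ℝ))
    (h : Fintype.card m < Module.finrank ℝ U + Module.finrank ℝ W) :
    ∃ x, x ∈ U ∧ x ∈ W ∧ x ≠ 0 := by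
  have hdim := Submodule.finrank_sup_add_finrank_inf_eq U W
  have hle : Module.finrank ℝ ↥(U ⊔ W) ≤ Fintype.card m := by
    have := Submodule.finrank_le (U ⊔ W)
    rwa [Module.finrank_fintype_fun_eq_card] at this
  have hpos : 0 < Module.finrank ℝ ↥(U ⊓ W) := by omega
  have hne : U ⊓ W ≠ ⊥ := by
    intro hbot
    rw [hbot] at hpos
    simp at hpos
  obtain ⟨x, hx, hx0⟩ := Submodule.exists_mem_ne_zero_of_ne_bot hne
  exact ⟨x, hx.1, hx.2, hx0⟩

lemma mem_span_coeff {m : Type*} [Fintype m] {N : ℕ} (w : Fin N → m → ℝ)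
    (s : Finset (Fin N)) {x : m → ℝ} (hx : x ∈ Submodule.span ℝ (w '' ↑s)) :
    ∃ a : Fin N → ℝ, (∀ i ∉ s, a i = 0) ∧ x = ∑ i, a i • w i := by
  rw [Set.image_eq_range, Submodule.mem_span_range_iff_exists_fun] at hx
  obtain ⟨c, hc⟩ := hx
  refine ⟨fun i => if h : i ∈ s then c ⟨i, h⟩ else 0, fun i hi => dif_neg hi, ?_⟩
  have h2 : ∑ i : Fin N, (if h : i ∈ s then c ⟨i, h⟩ else 0) • w i
      = ∑ i ∈ s, (if h : i ∈ s then c ⟨i, h⟩ else 0) • w i :=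
    (Finset.sum_subset (Finset.subset_univ s) (fun i _ hi => by simp [dif_neg hi])).symm
  rw [← hc]
  show _ = ∑ i : Fin N, (if h : i ∈ s then c ⟨i, h⟩ else 0) • w i
  rw [h2, ← Finset.sum_finset_coe (fun i => (if h : i ∈ s then c ⟨i, h⟩ else 0) • w i) s]
  exact Finset.sum_congr rfl fun i _ => by simp [dif_pos i.2]

lemma eig_le {m₁ m₂ : Type*} [Fintype m₁] [Fintype m₂] [DecidableEq m₁] [DecidableEq m₂]
    {N : ℕ} (hN : Fintype.card m₁ = N)
    (C : Matrix m₁ m₁ ℝ) (D : Matrix m₂ m₂ ℝ)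
    (u : Fin N → m₁ → ℝ) (v : Fin N → m₂ → ℝ) (a b : Fin N → ℝ)
    (hu : ∀ i j, u i ⬝ᵥ u j = if i = j then 1 else 0)
    (hv : ∀ i j, v i ⬝ᵥ v j = if i = j then 1 else 0)
    (hCu : ∀ i, C *ᵥ u i = a i • u i) (hDv : ∀ i, D *ᵥ v i = b i • v i)
    (ha : Antitone a) (hb : Antitone b)
    (e : m₂ ≃ m₁)
    (hR : ∀ x : m₂ → ℝ, x ⬝ᵥ (D *ᵥ x) ≤ (x ∘ e.symm) ⬝ᵥ (C *ᵥ (x ∘ e.symm)))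
    (k : Fin N) : b k ≤ a k := by
  classical
  set v' : Fin N → m₁ → ℝ := fun i t => v i (e.symm t) with hv'def
  have hv' : ∀ i j, v' i ⬝ᵥ v' j = if i = j then 1 else 0 := by
    intro i j
    have : v' i ⬝ᵥ v' j = v i ⬝ᵥ v j := by
      simp only [dotProduct, hv'def]
      exact Equiv.sum_comp e.symm (fun t => v i t * v j t)
    rw [this, hv i j]
  set U := Submodule.span ℝ (v' '' ↑(Finset.Iic k)) with hU
  set W := Submodule.span ℝ (u '' ↑(Finset.Ici k)) with hW
  have hdim : Fintype.card m₁ < Module.finrank ℝ U + Module.finrank ℝ W := by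
    rw [hU, hW, finrank_span_orth v' hv', finrank_span_orth u hu, Fin.card_Iic, Fin.card_Ici, hN]
    have := k.isLt
    omega
  obtain ⟨x, hxU, hxW, hx0⟩ := exists_mem_inter_ne_zero U W hdim
  obtain ⟨α, hαs, hxα⟩ := mem_span_coeff v' _ hxU
  obtain ⟨β, hβs, hxβ⟩ := mem_span_coeff u _ hxW
  set y : m₂ → ℝ := fun t => x (e t) with hy
  have hyv : y = ∑ i, α i • v i := by
    funext t
    simp only [hy, hxα, Finset.sum_apply, Pi.smul_apply, smul_eq_mul, hv'def,
      Equiv.symm_apply_apply]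
  have hye : y ∘ e.symm = x := by
    funext t; simp [hy]
  have hq1 : y ⬝ᵥ (D *ᵥ y) = ∑ i, b i * α i ^ 2 := by
    rw [hyv]; exact quad_comb D v b hv hDv α
  have hq2 : x ⬝ᵥ (C *ᵥ x) = ∑ i, a i * β i ^ 2 := by
    rw [hxβ]; exact quad_comb C u a hu hCu β
  have hd1 : x ⬝ᵥ x = ∑ i, α i ^ 2 := by rw [hxα]; exact dot_comb v' hv' α
  have hd2 : x ⬝ᵥ x = ∑ i, β i ^ 2 := by rw [hxβ]; exact dot_comb u hu β
  have hb1 : b k * (x ⬝ᵥ x) ≤ y ⬝ᵥ (D *ᵥ y) := by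
    rw [hq1, hd1, Finset.mul_sum]
    refine Finset.sum_le_sum fun i _ => ?_
    by_cases hi : i ∈ Finset.Iic k
    · exact mul_le_mul_of_nonneg_right (hb (Finset.mem_Iic.mp hi)) (sq_nonneg _)
    · rw [hαs i hi]; simp
  have hb2 : x ⬝ᵥ (C *ᵥ x) ≤ a k * (x ⬝ᵥ x) := by
    rw [hq2, hd2, Finset.mul_sum]
    refine Finset.sum_le_sum fun i _ => ?_
    by_cases hi : i ∈ Finset.Ici k
    · exact mul_le_mul_of_nonneg_right (ha (Finset.mem_Ici.mp hi)) (sq_nonneg _)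
    · rw [hβs i hi]; simp
  have hmid : y ⬝ᵥ (D *ᵥ y) ≤ x ⬝ᵥ (C *ᵥ x) := by
    have := hR y
    rwa [hye] at this
  have hxpos : 0 < x ⬝ᵥ x := by
    obtain ⟨t, ht⟩ := Function.ne_iff.mp hx0
    refine Finset.sum_pos' (fun i _ => mul_self_nonneg _) ⟨t, Finset.mem_univ t, ?_⟩
    exact mul_self_pos.mpr ht
  exact le_of_mul_le_mul_right (le_trans hb1 (le_trans hmid hb2)) hxpos

lemma eigBasis_dot {m : Type*} [Fintype m] [DecidableEq m] {A : Matrix m m ℝ}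
    (hA : A.IsHermitian) (i j : m) :
    ⇑(hA.eigenvectorBasis i) ⬝ᵥ ⇑(hA.eigenvectorBasis j) = if i = j then 1 else 0 := by
  have h := orthonormal_iff_ite.mp hA.eigenvectorBasis.orthonormal i j
  rw [← h]
  simp [PiLp.inner_apply, RCLike.inner_apply, dotProduct, mul_comm]

lemma antitone_revseq {M : ℕ} {g : Fin M → ℝ} (hg : Monotone g) :
    Antitone (fun k : Fin M => g (Fin.rev k)) :=
  fun _ _ hij => hg (Fin.rev_le_rev.mpr hij)

lemma sv_le_of_rayleigh {m₁ m₂ α β : Type*} [Fintype m₁] [Fintype m₂] [Fintype α] [Fintype β]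
    [DecidableEq m₁] [DecidableEq m₂]
    (X : Matrix m₁ α ℝ) (Y : Matrix m₂ β ℝ) (e : m₂ ≃ m₁)
    (hR : ∀ x : m₂ → ℝ, x ⬝ᵥ ((Y * Yᴴ) *ᵥ x) ≤ (x ∘ e.symm) ⬝ᵥ ((X * Xᴴ) *ᵥ (x ∘ e.symm)))
    (k : ℕ) : sv Y k ≤ sv X k := by
  classical
  have hC := Matrix.isHermitian_mul_conjTranspose_self X
  have hD := Matrix.isHermitian_mul_conjTranspose_self Y
  have hcard : Fintype.card m₂ = Fintype.card m₁ := Fintype.card_congr e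
  set fC : Fin (Fintype.card m₁) → ℝ :=
    fun i => hC.eigenvalues ((Fintype.equivFin m₁).symm i) with hfC
  set fD : Fin (Fintype.card m₂) → ℝ :=
    fun i => hD.eigenvalues ((Fintype.equivFin m₂).symm i) with hfD
  set aS : Fin (Fintype.card m₁) → ℝ := fun k => fC (Tuple.sort fC (Fin.rev k)) with haS
  set bS : Fin (Fintype.card m₁) → ℝ :=
    fun k => fD (Tuple.sort fD (Fin.rev (Fin.cast hcard.symm k))) with hbS
  set u : Fin (Fintype.card m₁) → m₁ → ℝ :=
    fun k => ⇑(hC.eigenvectorBasis ((Fintype.equivFin m₁).symm (Tuple.sort fC (Fin.rev k))))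
  set v : Fin (Fintype.card m₁) → m₂ → ℝ :=
    fun k => ⇑(hD.eigenvectorBasis ((Fintype.equivFin m₂).symm
      (Tuple.sort fD (Fin.rev (Fin.cast hcard.symm k)))))
  have hinj1 : Function.Injective
      (fun k : Fin (Fintype.card m₁) => (Fintype.equivFin m₁).symm (Tuple.sort fC (Fin.rev k))) :=
    (Fintype.equivFin m₁).symm.injective.comp
      ((Tuple.sort fC).injective.comp Fin.rev_injective)
  have hinj2 : Function.Injective (fun k : Fin (Fintype.card m₁) =>
      (Fintype.equivFin m₂).symm (Tuple.sort fD (Fin.rev (Fin.cast hcard.symm k)))) :=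
    (Fintype.equivFin m₂).symm.injective.comp ((Tuple.sort fD).injective.comp
      (Fin.rev_injective.comp fun _ _ h => by simpa [Fin.ext_iff] using h))
  have hu : ∀ i j, u i ⬝ᵥ u j = if i = j then 1 else 0 := by
    intro i j
    rw [eigBasis_dot hC]
    by_cases h : i = j
    · simp [h]
    · rw [if_neg (fun hh => h (hinj1 hh)), if_neg h]
  have hv : ∀ i j, v i ⬝ᵥ v j = if i = j then 1 else 0 := by
    intro i j
    rw [eigBasis_dot hD]
    by_cases h : i = j
    · simp [h]
    · rw [if_neg (fun hh => h (hinj2 hh)), if_neg h]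
  have hCu : ∀ i, (X * Xᴴ) *ᵥ u i = aS i • u i := fun i => hC.mulVec_eigenvectorBasis _
  have hDv : ∀ i, (Y * Yᴴ) *ᵥ v i = bS i • v i := fun i => hD.mulVec_eigenvectorBasis _
  have ha : Antitone aS := antitone_revseq (Tuple.monotone_sort fC)
  have hb : Antitone bS := by
    intro i j hij
    refine (Tuple.monotone_sort fD) (Fin.rev_le_rev.mpr ?_)
    rw [Fin.le_def, Fin.coe_cast, Fin.coe_cast]
    exact Fin.le_def.mp hij
  have key : ∀ kk : Fin (Fintype.card m₁), bS kk ≤ aS kk :=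
    eig_le rfl (X * Xᴴ) (Y * Yᴴ) u v aS bS hu hv hCu hDv ha hb e hR
  by_cases h1 : k < Fintype.card m₁
  · have h2 : k < Fintype.card m₂ := hcard ▸ h1
    have e1 : sv X k = Real.sqrt (aS ⟨k, h1⟩) := by
      simp only [sv, dif_pos h1]
      rfl
    have e2 : sv Y k = Real.sqrt (bS ⟨k, h1⟩) := by
      simp only [sv, dif_pos h2, hbS]
      congr 2
    rw [e1, e2]
    exact Real.sqrt_le_sqrt (key ⟨k, h1⟩)
  · have h2 : ¬ k < Fintype.card m₂ := fun h => h1 (hcard ▸ h)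
    simp only [sv, dif_neg h1, dif_neg h2, le_refl]

lemma sv_nonneg {m n : Type*} [Fintype m] [Fintype n] [DecidableEq m]
    (A : Matrix m n ℝ) (k : ℕ) : 0 ≤ sv A k := by
  by_cases h : k < Fintype.card m
  · simp only [sv, dif_pos h]
    exact Real.sqrt_nonneg _
  · simp only [sv, dif_neg h, le_refl]

lemma contract_mulVec {β α : Type*} [Fintype β] [Fintype α] [DecidableEq β]
    (K : Matrix β α ℝ) (hK : K * Kᵀ = 1) (w : α → ℝ) :
    (K *ᵥ w) ⬝ᵥ (K *ᵥ w) ≤ w ⬝ᵥ w := by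
  set P := Kᵀ * K with hP
  have hPt : Pᵀ = P := by rw [hP, Matrix.transpose_mul, Matrix.transpose_transpose]
  have hP2 : P * P = P := by
    rw [hP, Matrix.mul_assoc, ← Matrix.mul_assoc K Kᵀ K, hK, Matrix.one_mul]
  have key1 : (K *ᵥ w) ⬝ᵥ (K *ᵥ w) = (P *ᵥ w) ⬝ᵥ w := by
    rw [Matrix.dotProduct_mulVec, ← Matrix.mulVec_transpose,
      Matrix.mulVec_mulVec]
  have key2 : (P *ᵥ w) ⬝ᵥ (P *ᵥ w) = (P *ᵥ w) ⬝ᵥ w := by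
    rw [Matrix.dotProduct_mulVec (P *ᵥ w) P w, ← Matrix.mulVec_transpose, hPt,
      Matrix.mulVec_mulVec, hP2]
  have hcs := Finset.sum_mul_sq_le_sq_mul_sq Finset.univ (P *ᵥ w) w
  have e1 : ∑ i, (P *ᵥ w) i * w i = (P *ᵥ w) ⬝ᵥ w := rfl
  have e2 : ∑ i, (P *ᵥ w) i ^ 2 = (P *ᵥ w) ⬝ᵥ (P *ᵥ w) := by
    simp [dotProduct, sq]
  have e3 : ∑ i, w i ^ 2 = w ⬝ᵥ w := by simp [dotProduct, sq]
  rw [e1, e2, e3, key2] at hcs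
  rw [key1]
  by_cases ht : (P *ᵥ w) ⬝ᵥ w ≤ 0
  · refine le_trans ht ?_
    simp only [dotProduct]
    exact Finset.sum_nonneg fun i _ => mul_self_nonneg _
  · push_neg at ht
    nlinarith [hcs, ht]

lemma gram_ray {mm nn : Type*} [Fintype mm] [Fintype nn] (Y : Matrix mm nn ℝ) (x : mm → ℝ) :
    x ⬝ᵥ ((Y * Yᴴ) *ᵥ x) = (Yᵀ *ᵥ x) ⬝ᵥ (Yᵀ *ᵥ x) := by
  rw [Matrix.conjTranspose_eq_transpose_of_trivial, ← Matrix.mulVec_mulVec,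
    Matrix.dotProduct_mulVec, Matrix.mulVec_transpose]

def cmat {N : ℕ} {I μ : Fin N → ℕ} (S : Finset (Fin N))
    (Q : ∀ n, Matrix (Fin (I n)) (Fin (μ n)) ℝ) (m : Fin N) :
    Fin (if m ∈ S then μ m else I m) → Fin (I m) → ℝ :=
  fun x y => if h : m ∈ S then Q m y (Fin.cast (if_pos h) x)
             else (if Fin.cast (if_neg h) x = y then 1 else 0)

lemma cmat_orth {N : ℕ} {I μ : Fin N → ℕ} (S : Finset (Fin N))
    (Q : ∀ n, Matrix (Fin (I n)) (Fin (μ n)) ℝ) (m : Fin N)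
    (hQ : m ∈ S → (Q m)ᵀ * Q m = 1)
    (x x' : Fin (if m ∈ S then μ m else I m)) :
    ∑ t, cmat S Q m x t * cmat S Q m x' t = if x = x' then 1 else 0 := by
  by_cases h : m ∈ S
  · simp only [cmat, dif_pos h]
    have h1 : ∑ t, Q m t (Fin.cast (if_pos h) x) * Q m t (Fin.cast (if_pos h) x')
        = ((Q m)ᵀ * Q m) (Fin.cast (if_pos h) x) (Fin.cast (if_pos h) x') := by
      rw [Matrix.mul_apply]
      exact Finset.sum_congr rfl fun t _ => rfl
    rw [h1, hQ h, Matrix.one_apply]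
    congr 1
    rw [Fin.ext_iff, Fin.ext_iff]
    simp
  · simp only [cmat, dif_neg h]
    rw [Finset.sum_eq_single (Fin.cast (if_neg h) x)]
    · have h2 : (Fin.cast (if_neg h) x' = Fin.cast (if_neg h) x) ↔ x = x' := by
        rw [Fin.ext_iff, Fin.ext_iff]
        simp [eq_comm]
      simp only [if_pos rfl, if_true, one_mul]
      congr 1
      rw [eq_iff_iff]
      exact h2
    · intro t _ ht
      rw [if_neg (fun hh => ht hh.symm), zero_mul]
    · intro ht
      exact absurd (Finset.mem_univ _) ht

def Kmat {N : ℕ} {I μ : Fin N → ℕ} (S : Finset (Fin N))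
    (Q : ∀ n, Matrix (Fin (I n)) (Fin (μ n)) ℝ) (n : Fin N) :
    Matrix (∀ m : {m : Fin N // m ≠ n}, Fin (if m.val ∈ S then μ m.val else I m.val))
      (∀ m : {m : Fin N // m ≠ n}, Fin (I m.val)) ℝ :=
  Matrix.of fun x y => ∏ m : {m : Fin N // m ≠ n}, cmat S Q m.val (x m) (y m)

lemma Kmat_orth {N : ℕ} {I μ : Fin N → ℕ} (S : Finset (Fin N))
    (Q : ∀ n, Matrix (Fin (I n)) (Fin (μ n)) ℝ) (n : Fin N)
    (hQ : ∀ m ∈ S, (Q m)ᵀ * Q m = 1) :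
    Kmat S Q n * (Kmat S Q n)ᵀ = 1 := by
  ext x x'
  rw [Matrix.mul_apply]
  have h1 : ∀ y, Kmat S Q n x y * (Kmat S Q n)ᵀ y x'
      = ∏ m : {m : Fin N // m ≠ n},
          (cmat S Q m.val (x m) (y m) * cmat S Q m.val (x' m) (y m)) := by
    intro y
    rw [Matrix.transpose_apply]
    simp only [Kmat, Matrix.of_apply]
    rw [← Finset.prod_mul_distrib]
  rw [Finset.sum_congr rfl fun y _ => h1 y]
  have hps := Fintype.prod_sum (R := ℝ) (ι := {m : Fin N // m ≠ n})
    (f := fun m (t : Fin (I m.val)) => cmat S Q m.val (x m) t * cmat S Q m.val (x' m) t)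
  rw [← hps]
  have h2 : ∀ m : {m : Fin N // m ≠ n},
      ∑ t : Fin (I m.val), cmat S Q m.val (x m) t * cmat S Q m.val (x' m) t
      = if x m = x' m then 1 else 0 := fun m => cmat_orth S Q m.val (hQ m.val) (x m) (x' m)
  rw [Finset.prod_congr rfl fun m _ => h2 m, Finset.prod_boole, Matrix.one_apply]
  by_cases hxx : x = x'
  · simp [hxx]
  · rw [if_neg, if_neg hxx]
    intro hall
    exact hxx (funext fun m => hall m (Finset.mem_univ m))

set_option maxHeartbeats 2000000 in
lemma unfold_compress_apply {N : ℕ} {I μ : Fin N → ℕ} (A : (∀ m, Fin (I m)) → ℝ) (n : Fin N)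
    (S : Finset (Fin N)) (hn : n ∉ S) (Q : ∀ m, Matrix (Fin (I m)) (Fin (μ m)) ℝ)
    (i : Fin (I n))
    (x : ∀ m : {m : Fin N // m ≠ n}, Fin (if m.val ∈ S then μ m.val else I m.val)) :
    unfold (compress A S Q) n (Fin.cast (if_neg hn).symm i) x
      = ∑ y, Kmat S Q n x y * unfold A n i y := by
  classical
  set p : {m : Fin N // m ≠ n} → Prop := fun m => m.val ∈ S with hp
  set zr₀ : ∀ m' : {m' : {m : Fin N // m ≠ n} // ¬ p m'}, Fin (I m'.val.val) :=
    fun m' => Fin.cast (if_neg m'.property) (x m'.val) with hzr₀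
  have hsplit :
      ∑ y, Kmat S Q n x y * unfold A n i y
      = ∑ zs : ∀ m' : {m' : {m : Fin N // m ≠ n} // p m'}, Fin (I m'.val.val),
          (∏ m' : {m' : {m : Fin N // m ≠ n} // p m'},
            Q m'.val.val (zs m') (Fin.cast (if_pos m'.property) (x m'.val))) *
          unfold A n i
            ((Equiv.piEquivPiSubtypeProd p (fun m => Fin (I m.val))).symm (zs, zr₀)) := by
    rw [← Equiv.sum_comp (Equiv.piEquivPiSubtypeProd p (fun m => Fin (I m.val))).symm
      (fun y => Kmat S Q n x y * unfold A n i y), Fintype.sum_prod_type]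
    refine Finset.sum_congr rfl fun zs _ => ?_
    have hK : ∀ zr, Kmat S Q n x
          ((Equiv.piEquivPiSubtypeProd p (fun m => Fin (I m.val))).symm (zs, zr))
        = (∏ m' : {m' : {m : Fin N // m ≠ n} // p m'},
            Q m'.val.val (zs m') (Fin.cast (if_pos m'.property) (x m'.val)))
          * (if zr = zr₀ then 1 else 0) := by
      intro zr
      rw [Kmat, Matrix.of_apply,
        ← Fintype.prod_subtype_mul_prod_subtype p
          (fun m => cmat S Q m.val (x m)
            ((Equiv.piEquivPiSubtypeProd p (fun m => Fin (I m.val))).symm (zs, zr) m))]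
      congr 1
      · refine Finset.prod_congr rfl fun m' _ => ?_
        simp only [Equiv.piEquivPiSubtypeProd_symm_apply, dif_pos (show m'.val.val ∈ S from m'.property), dif_pos m'.property, cmat]
      · have : ∀ m' : {m' : {m : Fin N // m ≠ n} // ¬ p m'},
            cmat S Q m'.val.val (x m'.val)
              ((Equiv.piEquivPiSubtypeProd p (fun m => Fin (I m.val))).symm (zs, zr) m'.val)
            = if Fin.cast (if_neg m'.property) (x m'.val) = zr m' then 1 else 0 := by
          intro m'
          simp only [Equiv.piEquivPiSubtypeProd_symm_apply, dif_neg (show m'.val.val ∉ S from m'.property), dif_neg m'.property, cmat]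
        rw [Finset.prod_congr rfl fun m' _ => this m', Finset.prod_boole]
        by_cases hzz : zr = zr₀
        · subst hzz; simp [hzr₀]
        · rw [if_neg, if_neg hzz]
          intro hall
          refine hzz (funext fun m' => ?_)
          exact (hall m' (Finset.mem_univ m')).symm
    rw [Finset.sum_congr rfl fun zr _ => by rw [hK zr]]
    rw [Finset.sum_congr rfl fun zr _ => by
      rw [show ∀ (a b : ℝ), a * (if zr = zr₀ then (1:ℝ) else 0) * b
        = if zr = zr₀ then a * b else 0 from fun a b => by by_cases h : zr = zr₀ <;> simp [h]]]
    rw [Finset.sum_ite_eq' Finset.univ zr₀]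
    simp
  rw [hsplit]
  have hLHS : unfold (compress A S Q) n (Fin.cast (if_neg hn).symm i) x
      = compress A S Q (fun m =>
          if h : m = n then
            Fin.cast (congrArg (fun m => if m ∈ S then μ m else I m) h).symm
              (Fin.cast (if_neg hn).symm i)
          else x ⟨m, h⟩) := rfl
  rw [hLHS]
  simp only [compress]
  refine Fintype.sum_bijective
    (fun (j : ∀ m : {m : Fin N // m ∈ S}, Fin (I m.val))
      (m' : {m' : {m : Fin N // m ≠ n} // p m'}) => j ⟨m'.val.val, m'.property⟩)
    ⟨fun j1 j2 h => funext fun m => by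
        have := congrFun h ⟨⟨m.val, fun hh => hn (hh ▸ m.property)⟩, m.property⟩
        simpa using this,
      fun zs => ⟨fun m => zs ⟨⟨m.val, fun hh => hn (hh ▸ m.property)⟩, m.property⟩,
        funext fun m' => by simp⟩⟩
    _ _ (fun j => ?_)
  congr 1
  · refine (Fintype.prod_bijective
      (fun (m' : {m' : {m : Fin N // m ≠ n} // p m'}) =>
        (⟨m'.val.val, m'.property⟩ : {m : Fin N // m ∈ S}))
      ⟨fun a b h => by
          apply Subtype.ext; apply Subtype.ext
          simpa using congrArg Subtype.val h,
        fun m => ⟨⟨⟨m.val, fun hh => hn (hh ▸ m.property)⟩, m.property⟩, rfl⟩⟩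
      _ _ (fun m' => ?_)).symm
    simp only [dif_neg m'.val.property]
  · show A _ = A _
    refine congrArg A (funext fun mm => ?_)
    by_cases hmn : mm = n
    · subst hmn
      rw [dif_neg hn, dif_pos rfl, dif_pos rfl]
      apply Fin.ext
      simp
    · rw [dif_neg hmn, dif_neg hmn, Equiv.piEquivPiSubtypeProd_symm_apply]

/-- Singular values under partial Tucker compression: if
`B = A ×₁ Q₁ᵀ ⋯ ×_{n−1} Q_{n−1}ᵀ` with each `Q_m` having orthonormal columns, then every
singular value of the mode-`n` unfolding of `B` is at most the corresponding singular
value of the mode-`n` unfolding of `A`, and the tail sums of squares are dominated too. -/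
theorem stmt13 {N : ℕ} {I μ : Fin N → ℕ} (A : (∀ m, Fin (I m)) → ℝ) (n : Fin N)
    (Q : ∀ m, Matrix (Fin (I m)) (Fin (μ m)) ℝ)
    (hQ : ∀ m ∈ Finset.Iio n, (Q m)ᵀ * Q m = 1) :
    (∀ k : ℕ, sv (unfold (compress A (Finset.Iio n) Q) n) k ≤ sv (unfold A n) k) ∧
    ∀ μn : ℕ, ∑ k ∈ Finset.Ico μn (I n), sv (unfold (compress A (Finset.Iio n) Q) n) k ^ 2 ≤
      ∑ k ∈ Finset.Ico μn (I n), sv (unfold A n) k ^ 2 := by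
  classical
  have hn : n ∉ Finset.Iio n := by simp
  have hDn : (if n ∈ Finset.Iio n then μ n else I n) = I n := if_neg hn
  have hKo := Kmat_orth (Finset.Iio n) Q n hQ
  have hmain : ∀ k, sv (unfold (compress A (Finset.Iio n) Q) n) k ≤ sv (unfold A n) k := by
    intro k
    refine sv_le_of_rayleigh (unfold A n) (unfold (compress A (Finset.Iio n) Q) n)
      (finCongr hDn) (fun xv => ?_) k
    rw [gram_ray, gram_ray]
    have hvec : (unfold (compress A (Finset.Iio n) Q) n)ᵀ *ᵥ xv
        = Kmat (Finset.Iio n) Q n *ᵥ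
            ((unfold A n)ᵀ *ᵥ (xv ∘ (finCongr hDn).symm)) := by
      funext y
      have hstep1 : ((unfold (compress A (Finset.Iio n) Q) n)ᵀ *ᵥ xv) y
          = ∑ i : Fin (I n),
              unfold (compress A (Finset.Iio n) Q) n (Fin.cast (if_neg hn).symm i) y
                * xv (Fin.cast (if_neg hn).symm i) := by
        refine (Fintype.sum_bijective (Fin.cast (if_neg hn).symm)
          (finCongr (if_neg hn).symm).bijective _ _ (fun i => ?_)).symm
        rfl
      rw [hstep1]
      have hstep2 : ∀ i : Fin (I n),
          unfold (compress A (Finset.Iio n) Q) n (Fin.cast (if_neg hn).symm i) y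
          = ∑ y', Kmat (Finset.Iio n) Q n y y' * unfold A n i y' :=
        fun i => unfold_compress_apply A n (Finset.Iio n) hn Q i y
      rw [Finset.sum_congr rfl fun i _ => by rw [hstep2 i]]
      show _ = ∑ y', Kmat (Finset.Iio n) Q n y y' *
          ∑ i, (unfold A n)ᵀ y' i * (xv ∘ (finCongr hDn).symm) i
      simp only [Finset.sum_mul, Finset.mul_sum]
      rw [Finset.sum_comm]
      refine Finset.sum_congr rfl fun y' _ => Finset.sum_congr rfl fun i _ => ?_
      show Kmat (Finset.Iio n) Q n y y' * unfold A n i y' * xv (Fin.cast (if_neg hn).symm i)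
          = Kmat (Finset.Iio n) Q n y y' *
              ((unfold A n)ᵀ y' i * (xv ∘ (finCongr hDn).symm) i)
      rw [mul_assoc]
      rfl
    rw [hvec]
    exact contract_mulVec _ hKo _
  refine ⟨hmain, fun μn => ?_⟩
  refine Finset.sum_le_sum fun k _ => ?_
  exact pow_le_pow_left₀ (sv_nonneg _ k) (hmain k) 2

end
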